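/- Let K be a field with char(K) ≠ 2 and b ∈ K with b ≠ 0 and b ≠ −1. Then the polynomial λ1²·λ2 − λ1·λ2² + b·λ1 + λ2 is irreducible in the polynomial ring K[λ1, λ2]. -/

import Mathlib

section Aux

open Polynomial

open Polynomial

private theorem no_sqrt (K : Type*) [Field K] (h2 : (2:K) ≠ 0)
    (b : K) (hb1 : b ≠ -1) (y : Polynomial K)
    (hy : y ^ 2 = X ^ 4 - C (2*b+4) * X ^ 2 + C (b^2)) : False := by
  obtain ⟨e, he⟩ : ∃ e : K, e = 2*b+4 := ⟨_, rfl⟩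
  obtain ⟨f, hf⟩ : ∃ f : K, f = b^2 := ⟨_, rfl⟩
  rw [← he, ← hf] at hy
  set D : Polynomial K := X ^ 4 - C e * X ^ 2 + C f with hD
  have hDdeg : D.natDegree = 4 := by rw [hD]; compute_degree!
  have hydeg : y.natDegree = 2 := by
    have := congrArg Polynomial.natDegree hy
    rwa [natDegree_pow, hDdeg, show 4 = 2*2 from rfl, Nat.mul_left_cancel_iff (by norm_num)] at this
  set a := y.coeff 2 with ha
  set c := y.coeff 1 with hc
  set d := y.coeff 0 with hd
  have hcoeff : ∀ k, 3 ≤ k → y.coeff k = 0 := fun k hk =>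
    coeff_eq_zero_of_natDegree_lt (by omega)
  have key : ∀ n, (y^2).coeff n = D.coeff n := fun n => by rw [hy]
  have e1 : a * a = 1 := by
    have := key 4
    rw [sq, coeff_mul, Finset.Nat.sum_antidiagonal_eq_sum_range_succ_mk] at this
    simpa [Finset.sum_range_succ, hcoeff 3 (by norm_num), hcoeff 4 (by norm_num),
      hD, coeff_X_pow, coeff_C] using this
  have e2 : c * a + a * c = 0 := by
    have := key 3
    rw [sq, coeff_mul, Finset.Nat.sum_antidiagonal_eq_sum_range_succ_mk] at this
    simpa [Finset.sum_range_succ, hcoeff 3 (by norm_num),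
      hD, coeff_X_pow, coeff_C] using this
  have e3 : d * a + c * c + a * d = -e := by
    have := key 2
    rw [sq, coeff_mul, Finset.Nat.sum_antidiagonal_eq_sum_range_succ_mk] at this
    simpa [Finset.sum_range_succ, hD, coeff_X_pow, coeff_C] using this
  have e4 : d * d = f := by
    have := key 0
    rw [sq, coeff_mul, Finset.Nat.sum_antidiagonal_eq_sum_range_succ_mk] at this
    simpa [Finset.sum_range_succ, hD, coeff_X_pow, coeff_C] using this
  have ha0 : a ≠ 0 := fun h => by rw [h] at e1; simp at e1
  have hc0 : c = 0 := by
    rcases mul_eq_zero.mp (by linear_combination e2 : (2:K) * (a * c) = 0) with h | h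
    · exact absurd h h2
    · exact (mul_eq_zero.mp h).resolve_left ha0
  have h16 : (16:K) * (b + 1) = 0 := by
    rw [hc0] at e3
    have h5 : (d*a+0*0+a*d)^2 = (-e)^2 := by rw [e3]
    linear_combination (-1 : K)*h5 + 4*(d*d)*e1 + 4*e4 + 4*hf - (e+2*b+4)*he
  have h16' : (16:K) ≠ 0 := by
    have : (16:K) = 2^4 := by norm_num
    rw [this]; exact pow_ne_zero _ h2
  exact hb1 (eq_neg_of_add_eq_zero_left ((mul_eq_zero.mp h16).resolve_left h16'))

open Polynomial

private theorem aux_irred (K : Type*) [Field K] (h2 : (2:K) ≠ 0)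
    (b : K) (hb0 : b ≠ 0)
    (hnos : ∀ y : Polynomial K, y ^ 2 = X ^ 4 - C (2*b+4) * X ^ 2 + C (b^2) → False) :
    Irreducible (C X * X ^ 2 + C (C b - X ^ 2) * X + C X : Polynomial (Polynomial K)) := by
  classical
  letI : NormalizedGCDMonoid (Polynomial K) := UniqueFactorizationMonoid.toNormalizedGCDMonoid _
  set A := Polynomial K
  obtain ⟨g, hg⟩ : ∃ g : A, g = Polynomial.C b - X ^ 2 := ⟨_, rfl⟩
  rw [show (Polynomial.C b - X ^ 2 : A) = g from hg.symm]
  set q : Polynomial A := C X * X ^ 2 + C g * X + C X with hq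
  have hXne : (X : A) ≠ 0 := X_ne_zero
  have hprim : q.IsPrimitive := by
    intro r hr
    rw [C_dvd_iff_dvd_coeff] at hr
    have h0 : r ∣ X := by simpa [hq, coeff_C] using hr 0
    have h1 : r ∣ g := by simpa [hq, coeff_C] using hr 1
    have hCb : r ∣ Polynomial.C b := by
      have h3 : r ∣ g + X * X := dvd_add h1 (h0.mul_right X)
      have h4 : Polynomial.C b = g + X * X := by rw [hg]; ring
      rwa [← h4] at h3
    exact isUnit_of_dvd_unit hCb (isUnit_C.mpr (isUnit_iff_ne_zero.mpr hb0))
  set F := FractionRing A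
  rw [hprim.irreducible_iff_irreducible_map_fraction_map (K := F)]
  have hinj := IsFractionRing.injective A F
  set φ := algebraMap A F
  have hφX : φ X ≠ 0 := fun h => hXne (hinj (by simpa using h))
  have hmap : q.map φ = C (φ X) * X ^ 2 + C (φ g) * X + C (φ X) := by
    simp [hq]
  rw [hmap]
  rw [irreducible_iff_roots_eq_zero_of_degree_le_three]
  · rw [Multiset.eq_zero_iff_forall_notMem]
    intro x hx
    have hne : (C (φ X) * X ^ 2 + C (φ g) * X + C (φ X) : Polynomial F) ≠ 0 := by
      intro h
      have := congrArg (fun p => Polynomial.coeff p 2) h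
      simp [coeff_C] at this
      exact hφX this
    rw [mem_roots hne, IsRoot.def] at hx
    simp only [eval_add, eval_mul, eval_C, eval_pow, eval_X] at hx
    have : φ X * (x * x) + φ g * x + φ X = 0 := by
      rw [← hx]; ring
    refine quadratic_ne_zero_of_discrim_ne_sq (a := φ X) ?_ x this
    intro s hs
    -- s^2 = discrim = φ D
    have hD : discrim (φ X) (φ g) (φ X)
        = φ (X ^ 4 - Polynomial.C (2*b+4) * X ^ 2 + Polynomial.C (b^2)) := by
      rw [discrim]
      rw [← map_pow, ← map_ofNat φ 4, ← map_mul, ← map_mul, ← map_sub]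
      congr 1
      have hC : Polynomial.C (2*b+4) = 2 * Polynomial.C b + 4 := by
        simp [map_add, map_mul, map_ofNat]
      rw [hg, hC, C_pow]
      ring
    rw [hD] at hs
    -- s is integral over A
    have hint : IsIntegral A s := by
      refine ⟨Polynomial.X ^ 2 - Polynomial.C (X ^ 4 - Polynomial.C (2*b+4) * X ^ 2 + Polynomial.C (b^2)), monic_X_pow_sub_C _ (by norm_num), ?_⟩
      simp [Polynomial.eval₂_sub, hs.symm]
      exact sub_self _
    obtain ⟨y, hy⟩ := IsIntegrallyClosed.isIntegral_iff.mp hint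
    apply hnos y
    apply hinj
    rw [map_pow, hy, hs]
  · -- degree ≥ 2
    rw [natDegree_quadratic hφX]
  · rw [natDegree_quadratic hφX]; norm_num

end Aux

open MvPolynomial

theorem stmt_7 (K : Type*) [Field K] (hchar : ringChar K ≠ 2)
    (b : K) (hb0 : b ≠ 0) (hb1 : b ≠ -1) :
    Irreducible ((X 0) ^ 2 * X 1 - X 0 * (X 1) ^ 2 + C b * X 0 + X 1 :
      MvPolynomial (Fin 2) K) := by
  have h2 : (2:K) ≠ 0 := Ring.two_ne_zero hchar
  let e : MvPolynomial (Fin 2) K ≃ₐ[K] Polynomial (Polynomial K) :=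
    (finSuccEquiv K 1).trans (Polynomial.mapAlgEquiv
      ((finSuccEquiv K 0).trans (Polynomial.mapAlgEquiv (isEmptyAlgEquiv K (Fin 0)))))
  have h1 : e (X 0) = Polynomial.X := by
    simp [e, finSuccEquiv_X_zero, Polynomial.mapAlgEquiv]
  have h2' : e (X 1) = Polynomial.C Polynomial.X := by
    have h0 : (X 1 : MvPolynomial (Fin 2) K) = X (Fin.succ 0) := rfl
    rw [h0]
    simp only [e, AlgEquiv.trans_apply, finSuccEquiv_X_succ]
    simp [Polynomial.mapAlgEquiv, finSuccEquiv_X_zero]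
  have h3 : e (C b) = Polynomial.C (Polynomial.C b) := by
    have hb : (C b : MvPolynomial (Fin 2) K) = algebraMap K _ b := rfl
    rw [hb, AlgEquiv.commutes]
    rfl
  rw [← MulEquiv.irreducible_iff e]
  have hep : e ((X 0) ^ 2 * X 1 - X 0 * (X 1) ^ 2 + C b * X 0 + X 1)
      = (Polynomial.C Polynomial.X * Polynomial.X ^ 2 +
        Polynomial.C (Polynomial.C b - Polynomial.X ^ 2) * Polynomial.X +
        Polynomial.C Polynomial.X : Polynomial (Polynomial K)) := by
    simp only [map_add, map_sub, map_mul, map_pow, h1, h2', h3, Polynomial.C_sub,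
      Polynomial.C_pow]
    ring
  rw [hep]
  exact aux_irred K h2 b hb0 (fun y hy => no_sqrt K h2 b hb1 y hy)
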